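/- Let S = R⟨x₁,…,xₙ; σ, δ⟩ be a free skew extension with δ locally nilpotent. Then for every a ∈ R and every q ≥ 0 there exists a positive integer N_q(a) such that for every monomial w of length ≥ N_q(a) in x₁,…,xₙ, either a·w = 0 or ord(a·w) > q. Consequently, the multiplication of S extends to a well-defined ring multiplication on the set R⟨⟨x₁,…,xₙ; σ, δ⟩⟩ of formal series Σ_w w a_w over all monomials w. -/

import Mathlib

/-- `δ : R → Rⁿ` is a right `σ`-derivation: additive and
`δ(rs) = δ(r)σ(s) + rδ(s)` (row-by-matrix multiplication componentwise). -/
def IsRightSigmaDeriv {R : Type} [Ring R] {n : ℕ}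
    (σ : R →+* Matrix (Fin n) (Fin n) R) (δ : R → Fin n → R) : Prop :=
  (∀ r s : R, δ (r + s) = δ r + δ s) ∧
  ∀ (r s : R) (j : Fin n), δ (r * s) j = (∑ i, δ r i * σ s i j) + r * δ s j

/-- `S` (an `R`-ring via `lam`) together with `x₁,…,xₙ` is a `(σ,δ)`-free skew
extension of `R`: the multiplicative submonoid generated by the `xᵢ` is free on them
(the induced monoid homomorphism from the free monoid on `n` letters is injective),
`S` is a free right `R`-module with basis the set of monomials in the `xᵢ`
(every element of `S` is uniquely a finite sum `Σ_w w·a_w`), and the commutation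
rule `r·x_j = Σᵢ xᵢσ_{ij}(r) + δ_j(r)` holds. -/
def IsSkewFreeExt {R : Type} [Ring R] {n : ℕ}
    (σ : R →+* Matrix (Fin n) (Fin n) R) (δ : R → Fin n → R)
    (S : Type) [Ring S] (lam : R →+* S) (x : Fin n → S) : Prop :=
  Function.Injective (FreeMonoid.lift x) ∧
  Function.Bijective (fun c : FreeMonoid (Fin n) →₀ R =>
    c.sum fun w a => FreeMonoid.lift x w * lam a) ∧
  ∀ (r : R) (j : Fin n), lam r * x j = (∑ i, x i * lam (σ r i j)) + lam (δ r j)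

/-- Iterated application of the components of `δ` along a list of indices:
`deltaWord δ [j₁, …, j_p] a = δ_{j_p}(⋯(δ_{j₁}(a))⋯)`. -/
def deltaWord {R : Type} [Ring R] {n : ℕ} (δ : R → Fin n → R) :
    List (Fin n) → R → R
  | [], a => a
  | j :: l, a => deltaWord δ l (δ a j)

/-- `δ` is locally nilpotent: for every `a ∈ R` there is `p ≥ 1` such that every
`p`-fold composition of components of `δ` kills `a`. -/
def LocallyNilpotentDeriv {R : Type} [Ring R] {n : ℕ} (δ : R → Fin n → R) : Prop :=
  ∀ a : R, ∃ p : ℕ, 0 < p ∧ ∀ l : List (Fin n), l.length = p → deltaWord δ l a = 0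

namespace SkewAux

variable {R : Type} [Ring R] {n : ℕ}

theorem deltaWord_append (δ : R → Fin n → R) (l1 l2 : List (Fin n)) (a : R) :
    deltaWord δ (l1 ++ l2) a = deltaWord δ l2 (deltaWord δ l1 a) := by
  induction l1 generalizing a with
  | nil => rfl
  | cons j l ih => simp [deltaWord, ih]

theorem delta_zero (δ : R → Fin n → R) (hadd : ∀ r s : R, δ (r + s) = δ r + δ s) :
    δ 0 = 0 := by
  have h2 : δ (0:R) = δ 0 + δ 0 := by simpa using hadd 0 0
  exact left_eq_add.mp h2

theorem deltaWord_zero (δ : R → Fin n → R) (hadd : ∀ r s : R, δ (r + s) = δ r + δ s)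
    (l : List (Fin n)) : deltaWord δ l 0 = 0 := by
  induction l with
  | nil => rfl
  | cons j l ih => simp [deltaWord, delta_zero δ hadd, ih]

variable {S : Type} [Ring S] (lam : R →+* S) (x : Fin n → S)

/-- evaluation of a finsupp coefficient family -/
def Ev (c : FreeMonoid (Fin n) →₀ R) : S :=
  c.sum fun w a => FreeMonoid.lift x w * lam a

theorem Ev_add (c d : FreeMonoid (Fin n) →₀ R) : Ev lam x (c + d) = Ev lam x c + Ev lam x d := by
  classical
  unfold Ev
  apply Finsupp.sum_add_index <;> intros <;> simp [mul_add]

theorem Ev_single (w : FreeMonoid (Fin n)) (a : R) :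
    Ev lam x (Finsupp.single w a) = FreeMonoid.lift x w * lam a := by
  unfold Ev
  rw [Finsupp.sum_single_index]; simp

theorem Ev_mapDomain (v : FreeMonoid (Fin n)) (c : FreeMonoid (Fin n) →₀ R) :
    Ev lam x (Finsupp.mapDomain (fun w => v * w) c) = FreeMonoid.lift x v * Ev lam x c := by
  unfold Ev
  rw [Finsupp.sum_mapDomain_index (by intro b; simp) (by intro b m1 m2; simp [mul_add])]
  rw [Finsupp.mul_sum]
  congr 1; funext w a
  simp [map_mul, mul_assoc]

theorem Ev_mapRange (r : R) (c : FreeMonoid (Fin n) →₀ R) :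
    Ev lam x (Finsupp.mapRange (fun a => a * r) (zero_mul r) c) = Ev lam x c * lam r := by
  unfold Ev
  rw [Finsupp.sum_mapRange_index (by intro a; simp)]
  rw [Finsupp.sum_mul]
  congr 1; funext w a
  simp [map_mul, mul_assoc]

variable (hbij : Function.Bijective (fun c : FreeMonoid (Fin n) →₀ R =>
    c.sum fun w a => FreeMonoid.lift x w * lam a))

/-- the inverse map -/
noncomputable def Esym : S → (FreeMonoid (Fin n) →₀ R) :=
  (Equiv.ofBijective _ hbij).symm

theorem Ev_Esym (s : S) : Ev lam x (Esym lam x hbij s) = s :=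
  (Equiv.ofBijective _ hbij).apply_symm_apply s

theorem Esym_eq_of (s : S) (c : FreeMonoid (Fin n) →₀ R) (h : Ev lam x c = s) :
    Esym lam x hbij s = c := by
  apply hbij.injective
  show Ev lam x _ = Ev lam x c
  rw [Ev_Esym, h]

theorem Esym_add (s t : S) :
    Esym lam x hbij (s + t) = Esym lam x hbij s + Esym lam x hbij t := by
  apply Esym_eq_of
  rw [Ev_add, Ev_Esym, Ev_Esym]

theorem Esym_basis (w : FreeMonoid (Fin n)) (a : R) :
    Esym lam x hbij (FreeMonoid.lift x w * lam a) = Finsupp.single w a := by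
  apply Esym_eq_of; exact Ev_single lam x w a

theorem Esym_zero : Esym lam x hbij 0 = 0 := by
  apply Esym_eq_of; simp [Ev]

theorem Esym_mul_word (v : FreeMonoid (Fin n)) (s : S) :
    Esym lam x hbij (FreeMonoid.lift x v * s) =
      Finsupp.mapDomain (fun w => v * w) (Esym lam x hbij s) := by
  apply Esym_eq_of
  rw [Ev_mapDomain, Ev_Esym]

theorem Esym_mul_lam (s : S) (r : R) :
    Esym lam x hbij (s * lam r) =
      Finsupp.mapRange (fun a => a * r) (zero_mul r) (Esym lam x hbij s) := by
  apply Esym_eq_of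
  rw [Ev_mapRange, Ev_Esym]

theorem Esym_sum {ι : Type} (t : Finset ι) (f : ι → S) :
    Esym lam x hbij (∑ i ∈ t, f i) = ∑ i ∈ t, Esym lam x hbij (f i) := by
  classical
  induction t using Finset.induction with
  | empty => simp [Esym_zero]
  | insert _ _ hni ih => rw [Finset.sum_insert hni, Finset.sum_insert hni, Esym_add, ih]

variable (σ : R →+* Matrix (Fin n) (Fin n) R) (δ : R → Fin n → R)

/-- basic expansion -/
theorem expand
    (hrel : ∀ (r : R) (j : Fin n), lam r * x j = (∑ i, x i * lam (σ r i j)) + lam (δ r j))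
    (a : R) (j : Fin n) (w : FreeMonoid (Fin n)) :
    lam a * FreeMonoid.lift x (FreeMonoid.of j * w) =
      (∑ i, x i * (lam (σ a i j) * FreeMonoid.lift x w)) +
        lam (δ a j) * FreeMonoid.lift x w := by
  rw [map_mul, FreeMonoid.lift_eval_of, ← mul_assoc, hrel, add_mul, Finset.sum_mul]
  congr 1
  · congr 1; funext i; rw [mul_assoc]

theorem coeff_one
    (hrel : ∀ (r : R) (j : Fin n), lam r * x j = (∑ i, x i * lam (σ r i j)) + lam (δ r j))
    (hadd : ∀ r s : R, δ (r + s) = δ r + δ s) :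
    ∀ (l : List (Fin n)) (a : R),
      Esym lam x hbij (lam a * FreeMonoid.lift x (FreeMonoid.ofList l)) 1 =
        deltaWord δ l a := by
  intro l
  induction l with
  | nil =>
      intro a
      have h1 : (FreeMonoid.ofList ([] : List (Fin n))) = 1 := rfl
      rw [h1]
      have : lam a * FreeMonoid.lift x 1 = FreeMonoid.lift x 1 * lam a := by simp
      rw [this, Esym_basis]
      simp [deltaWord]
  | cons j l ih =>
      intro a
      have h1 : FreeMonoid.ofList (j :: l) = FreeMonoid.of j * FreeMonoid.ofList l := rfl
      rw [h1, expand lam x σ δ hrel, Esym_add, Esym_sum]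
      rw [Finsupp.add_apply, Finsupp.finset_sum_apply]
      have hz : ∀ i : Fin n,
          Esym lam x hbij (x i * (lam (σ a i j) * FreeMonoid.lift x (FreeMonoid.ofList l))) 1 = 0 := by
        intro i
        have hx : x i = FreeMonoid.lift x (FreeMonoid.of i) := (FreeMonoid.lift_eval_of x i).symm
        rw [hx, Esym_mul_word]
        apply Finsupp.mapDomain_notin_range
        rintro ⟨w, hw⟩
        have := congrArg FreeMonoid.toList hw
        simp [FreeMonoid.toList_mul] at this
      rw [Finset.sum_congr rfl (fun i _ => hz i), Finset.sum_const_zero, zero_add, ih]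
      rfl

theorem main_bound
    (hrel : ∀ (r : R) (j : Fin n), lam r * x j = (∑ i, x i * lam (σ r i j)) + lam (δ r j))
    (hadd : ∀ r s : R, δ (r + s) = δ r + δ s)
    (hnil : ∀ a : R, ∃ p : ℕ, 0 < p ∧ ∀ l : List (Fin n), l.length = p → deltaWord δ l a = 0) :
    ∀ (q p : ℕ) (a : R), (∀ l : List (Fin n), l.length = p → deltaWord δ l a = 0) →
      ∃ N : ℕ, 0 < N ∧ ∀ w : FreeMonoid (Fin n), N ≤ (FreeMonoid.toList w).length →
        ∀ v ∈ (Esym lam x hbij (lam a * FreeMonoid.lift x w)).support,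
          q < (FreeMonoid.toList v).length := by
  intro q
  induction q with
  | zero =>
    intro p a hp
    refine ⟨p + 1, Nat.succ_pos _, ?_⟩
    intro w hw v hv
    by_contra hlen
    push_neg at hlen
    have hv1 : v = (1 : FreeMonoid (Fin n)) := by
      have h0 : FreeMonoid.toList v = [] := List.length_eq_zero_iff.mp (Nat.le_zero.mp hlen)
      apply FreeMonoid.toList.injective
      simpa using h0
    have hco : Esym lam x hbij (lam a * FreeMonoid.lift x w) 1 = 0 := by
      have hw2 : w = FreeMonoid.ofList (FreeMonoid.toList w) := by simp
      rw [hw2, coeff_one lam x hbij σ δ hrel hadd]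
      have hsplit : FreeMonoid.toList w =
          (FreeMonoid.toList w).take p ++ (FreeMonoid.toList w).drop p :=
        (List.take_append_drop p _).symm
      rw [hsplit, deltaWord_append, hp _ (by simp; omega), deltaWord_zero δ hadd]
    rw [hv1] at hv
    exact (Finsupp.mem_support_iff.mp hv) hco
  | succ q ihq =>
    intro p
    induction p with
    | zero =>
      intro a hp
      have ha : a = 0 := by simpa [deltaWord] using hp [] rfl
      refine ⟨1, one_pos, ?_⟩
      intro w hw v hv
      rw [ha] at hv
      rw [map_zero, zero_mul, Esym_zero] at hv
      simp at hv
    | succ p ihp =>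
      intro a hp
      classical
      have h1 : ∀ ij : Fin n × Fin n, ∃ N : ℕ, 0 < N ∧
          ∀ w : FreeMonoid (Fin n), N ≤ (FreeMonoid.toList w).length →
            ∀ v ∈ (Esym lam x hbij (lam (σ a ij.1 ij.2) * FreeMonoid.lift x w)).support,
              q < (FreeMonoid.toList v).length := by
        intro ij
        obtain ⟨p', _, hp'⟩ := hnil (σ a ij.1 ij.2)
        exact ihq p' _ hp'
      choose N1 hN1pos hN1 using h1
      have h2 : ∀ j : Fin n, ∃ N : ℕ, 0 < N ∧
          ∀ w : FreeMonoid (Fin n), N ≤ (FreeMonoid.toList w).length →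
            ∀ v ∈ (Esym lam x hbij (lam (δ a j) * FreeMonoid.lift x w)).support,
              q + 1 < (FreeMonoid.toList v).length := by
        intro j
        apply ihp
        intro l hl
        have := hp (j :: l) (by simp [hl])
        simpa [deltaWord] using this
      choose N2 hN2pos hN2 using h2
      refine ⟨1 + ((Finset.univ.sup N1) ⊔ (Finset.univ.sup N2)), by omega, ?_⟩
      intro w hw v hv
      obtain ⟨j, t, ht⟩ : ∃ j t, FreeMonoid.toList w = j :: t := by
        cases h : FreeMonoid.toList w with
        | nil => rw [h] at hw; simp at hw
        | cons j t => exact ⟨j, t, rfl⟩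
      have htlen : (FreeMonoid.toList w).length = t.length + 1 := by rw [ht]; simp
      have hwlen : (Finset.univ.sup N1) ⊔ (Finset.univ.sup N2) ≤ t.length := by omega
      have hw' : w = FreeMonoid.of j * FreeMonoid.ofList t := by
        apply FreeMonoid.toList.injective
        simp [FreeMonoid.toList_mul, ht]
      rw [hw', expand lam x σ δ hrel, Esym_add, Esym_sum] at hv
      have hv2 := Finsupp.support_add hv
      rcases Finset.mem_union.mp hv2 with hvA | hvB
      · obtain ⟨i, _, hvi⟩ := Finset.mem_biUnion.mp (Finsupp.support_finset_sum hvA)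
        rw [show x i = FreeMonoid.lift x (FreeMonoid.of i) from
          (FreeMonoid.lift_eval_of x i).symm, Esym_mul_word] at hvi
        obtain ⟨v', hv', hvv⟩ := Finset.mem_image.mp (Finsupp.mapDomain_support hvi)
        have hq : q < (FreeMonoid.toList v').length := by
          apply hN1 (i, j) (FreeMonoid.ofList t) _ v' hv'
          simp only [FreeMonoid.toList_ofList]
          calc N1 (i, j) ≤ Finset.univ.sup N1 := Finset.le_sup (Finset.mem_univ _)
            _ ≤ _ := le_trans le_sup_left hwlen
        rw [← hvv]
        simp only [FreeMonoid.toList_mul, FreeMonoid.toList_of, List.length_append,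
          List.length_cons, List.length_nil]
        omega
      · apply hN2 j (FreeMonoid.ofList t) _ v hvB
        simp only [FreeMonoid.toList_ofList]
        calc N2 j ≤ Finset.univ.sup N2 := Finset.le_sup (Finset.mem_univ _)
          _ ≤ _ := le_trans le_sup_right hwlen

end SkewAux



/-- If `δ` is locally nilpotent then: (1) for every `a ∈ R` and `q ≥ 0` there is
`N > 0` such that for every monomial `w` of length `≥ N`, either `a·w = 0` or
`ord(a·w) > q` (every monomial occurring in `a·w` has length `> q`); and
(2) the multiplication of `S` extends to the set of formal series
`Σ_w w·a_w`: for any coefficient families `b, c` and any monomial `u`, only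
finitely many pairs `(v, w)` contribute a nonzero coefficient of `u` to the
product `(Σ_v v·b_v)(Σ_w w·c_w)`. -/
theorem skewFreeExt_series {R : Type} [Ring R] {n : ℕ}
    (σ : R →+* Matrix (Fin n) (Fin n) R) (δ : R → Fin n → R)
    (hδ : IsRightSigmaDeriv σ δ) (hnil : LocallyNilpotentDeriv δ)
    (S : Type) [Ring S] (lam : R →+* S) (x : Fin n → S)
    (hS : IsSkewFreeExt σ δ S lam x) :
    (∀ (a : R) (q : ℕ), ∃ N : ℕ, 0 < N ∧
      ∀ w : FreeMonoid (Fin n), N ≤ (FreeMonoid.toList w).length →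
        lam a * FreeMonoid.lift x w = 0 ∨
        ∀ v ∈ ((Equiv.ofBijective _ hS.2.1).symm
            (lam a * FreeMonoid.lift x w)).support,
          q < (FreeMonoid.toList v).length) ∧
    ∀ (b c : FreeMonoid (Fin n) → R) (u : FreeMonoid (Fin n)),
      Set.Finite {p : FreeMonoid (Fin n) × FreeMonoid (Fin n) |
        ((Equiv.ofBijective _ hS.2.1).symm
          (FreeMonoid.lift x p.1 * lam (b p.1) *
            (FreeMonoid.lift x p.2 * lam (c p.2)))) u ≠ 0} := by

  classical
  have hbij := hS.2.1
  have hrel := hS.2.2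
  have hadd := hδ.1
  have main := SkewAux.main_bound lam x hbij σ δ hrel hadd hnil
  have hEs : ∀ s : S, (Equiv.ofBijective _ hS.2.1).symm s = SkewAux.Esym lam x hbij s :=
    fun s => rfl
  constructor
  · intro a q
    obtain ⟨p, hp0, hp⟩ := hnil a
    obtain ⟨N, hN0, hN⟩ := main q p a hp
    refine ⟨N, hN0, fun w hw => Or.inr ?_⟩
    rw [hEs]
    exact hN w hw
  · intro b c u
    have hch : ∀ v : FreeMonoid (Fin n), ∃ N : ℕ, 0 < N ∧
        ∀ w : FreeMonoid (Fin n), N ≤ (FreeMonoid.toList w).length →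
          ∀ v' ∈ (SkewAux.Esym lam x hbij (lam (b v) * FreeMonoid.lift x w)).support,
            (FreeMonoid.toList u).length < (FreeMonoid.toList v').length := by
      intro v
      obtain ⟨p, _, hp⟩ := hnil (b v)
      exact main (FreeMonoid.toList u).length p (b v) hp
    choose N hN0 hN using hch
    have hfinv : Set.Finite {v : FreeMonoid (Fin n) |
        (FreeMonoid.toList v).length ≤ (FreeMonoid.toList u).length} :=
      (List.finite_length_le (Fin n) (FreeMonoid.toList u).length).preimage
        FreeMonoid.toList.injective.injOn
    apply Set.Finite.subset
      (hfinv.biUnion (fun v _ => Set.Finite.prod (Set.finite_singleton v)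
        ((List.finite_length_lt (Fin n) (N v)).preimage
          FreeMonoid.toList.injective.injOn)))
    rintro ⟨v, w⟩ hnz
    simp only [Set.mem_setOf_eq] at hnz
    rw [hEs] at hnz
    have heq : FreeMonoid.lift x v * lam (b v) * (FreeMonoid.lift x w * lam (c w)) =
        FreeMonoid.lift x v * ((lam (b v) * FreeMonoid.lift x w) * lam (c w)) := by
      rw [mul_assoc, ← mul_assoc (lam (b v))]
    rw [heq, SkewAux.Esym_mul_word, SkewAux.Esym_mul_lam] at hnz
    have hu : u ∈ (Finsupp.mapDomain (fun w' => v * w')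
        (Finsupp.mapRange (fun a => a * c w) (zero_mul _)
          (SkewAux.Esym lam x hbij (lam (b v) * FreeMonoid.lift x w)))).support :=
      Finsupp.mem_support_iff.mpr hnz
    obtain ⟨u', hu', huv⟩ := Finset.mem_image.mp (Finsupp.mapDomain_support hu)
    have hu'' := Finsupp.support_mapRange hu'
    have hulen : (FreeMonoid.toList u).length =
        (FreeMonoid.toList v).length + (FreeMonoid.toList u').length := by
      rw [← huv, FreeMonoid.toList_mul, List.length_append]
    have hwlt : (FreeMonoid.toList w).length < N v := by
      by_contra hge
      push_neg at hge
      have := hN v w hge u' hu''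
      omega
    refine Set.mem_biUnion (show v ∈ {v' : FreeMonoid (Fin n) |
        (FreeMonoid.toList v').length ≤ (FreeMonoid.toList u).length} from by
      simp only [Set.mem_setOf_eq]; omega) ?_
    exact ⟨rfl, hwlt⟩
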